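/- Let N ≥ 3 and let p, q : ({0,1}^N) → ℝ be two probability distributions on N-bit strings (nonnegative, summing to 1) that are strictly positive at every string. Write the coordinates as indices 0,…,N−1 and let 'last' denote index N−1. Suppose that for every k ∈ {0,…,N−2} the conditional distributions of the pair of bits (a_k, a_last) given the remaining N−2 bits agree for p and q; equivalently, for every string a, p(a) · (Σ_{b : b_j = a_j for all j ∉ {k, last}} q(b)) = q(a) · (Σ_{b : b_j = a_j for all j ∉ {k, last}} p(b)). Then p = q. (A probability distribution on N-bit strings with everywhere-positive conditionals is entirely determined by the conditional distributions of each pair (A_k, A_N) given the other bits.) -/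

import Mathlib

/-- A strictly positive probability distribution on `N`-bit strings (`N ≥ 3`) is entirely
determined by the conditional distributions of each pair of bits `(a_k, a_last)` given the
remaining `N - 2` bits. -/
theorem dist_determined_by_pair_conditionals
    (N : ℕ) (hN : 3 ≤ N) (last : Fin N) (hlast : (last : ℕ) = N - 1)
    (p q : (Fin N → Bool) → ℝ)
    (hp_pos : ∀ a, 0 < p a) (hq_pos : ∀ a, 0 < q a)
    (hp_sum : ∑ a, p a = 1) (hq_sum : ∑ a, q a = 1)
    (h : ∀ k : Fin N, k ≠ last → ∀ a : Fin N → Bool,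
      p a * (∑ b ∈ Finset.univ.filter (fun b : Fin N → Bool =>
              ∀ j : Fin N, j ≠ k → j ≠ last → b j = a j), q b)
        = q a * (∑ b ∈ Finset.univ.filter (fun b : Fin N → Bool =>
              ∀ j : Fin N, j ≠ k → j ≠ last → b j = a j), p b)) :
    p = q := by
  set r : (Fin N → Bool) → ℝ := fun a => p a / q a with hr
  -- key: if a and a' agree outside {k, last} (k ≠ last), then r a = r a'
  have key : ∀ k : Fin N, k ≠ last → ∀ a a' : Fin N → Bool,
      (∀ j : Fin N, j ≠ k → j ≠ last → a' j = a j) → r a = r a' := by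
    intro k hk a a' hag
    have hset : (Finset.univ.filter (fun b : Fin N → Bool =>
        ∀ j : Fin N, j ≠ k → j ≠ last → b j = a' j))
      = (Finset.univ.filter (fun b : Fin N → Bool =>
        ∀ j : Fin N, j ≠ k → j ≠ last → b j = a j)) := by
      apply Finset.filter_congr
      intro b _
      exact ⟨fun h' j h1 h2 => (h' j h1 h2).trans (hag j h1 h2),
             fun h' j h1 h2 => (h' j h1 h2).trans (hag j h1 h2).symm⟩
    set S := Finset.univ.filter (fun b : Fin N → Bool =>
        ∀ j : Fin N, j ≠ k → j ≠ last → b j = a j) with hS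
    have e1 : p a * (∑ b ∈ S, q b) = q a * (∑ b ∈ S, p b) := h k hk a
    have e2 : p a' * (∑ b ∈ S, q b) = q a' * (∑ b ∈ S, p b) := by
      have := h k hk a'
      rwa [hset] at this
    have hSne : S.Nonempty := ⟨a, by simp [hS]⟩
    have hPpos : 0 < ∑ b ∈ S, p b :=
      Finset.sum_pos (fun b _ => hp_pos b) hSne
    have hQpos : 0 < ∑ b ∈ S, q b :=
      Finset.sum_pos (fun b _ => hq_pos b) hSne
    have hcross : p a * q a' = q a * p a' := by
      have h1 : p a * p a' * (∑ b ∈ S, q b) = q a * p a' * (∑ b ∈ S, p b) := by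
        calc p a * p a' * (∑ b ∈ S, q b) = (p a * ∑ b ∈ S, q b) * p a' := by ring
          _ = (q a * ∑ b ∈ S, p b) * p a' := by rw [e1]
          _ = q a * p a' * (∑ b ∈ S, p b) := by ring
      have h2 : p a * p a' * (∑ b ∈ S, q b) = q a' * p a * (∑ b ∈ S, p b) := by
        calc p a * p a' * (∑ b ∈ S, q b) = (p a' * ∑ b ∈ S, q b) * p a := by ring
          _ = (q a' * ∑ b ∈ S, p b) * p a := by rw [e2]
          _ = q a' * p a * (∑ b ∈ S, p b) := by ring
      have h3 : q a * p a' * (∑ b ∈ S, p b) = q a' * p a * (∑ b ∈ S, p b) := by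
        rw [← h1, h2]
      have := mul_right_cancel₀ hPpos.ne' h3
      linarith
    simp only [hr]
    rw [div_eq_div_iff (hq_pos a).ne' (hq_pos a').ne']
    linarith [hcross]
  -- single coordinate update preserves r
  have upd : ∀ (a : Fin N → Bool) (j : Fin N) (v : Bool),
      r a = r (Function.update a j v) := by
    intro a j v
    by_cases hj : j = last
    · have h2 : (2 : ℕ) < N := by omega
      set k : Fin N := ⟨0, by omega⟩ with hkdef
      have hk : k ≠ last := by
        intro hc
        have : (k : ℕ) = (last : ℕ) := by rw [hc]
        simp [hkdef, hlast] at this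
        omega
      apply key k hk
      intro j' h1 h2'
      rw [Function.update_of_ne (hj ▸ h2')]
    · apply key j hj
      intro j' h1 h2'
      rw [Function.update_of_ne h1]
  -- r constant
  have const : ∀ a b : Fin N → Bool, r a = r b := by
    have main : ∀ s : Finset (Fin N), ∀ a b : Fin N → Bool,
        (∀ j ∉ s, a j = b j) → r a = r b := by
      intro s
      induction s using Finset.induction_on with
      | empty =>
        intro a b hab
        have : a = b := funext fun j => hab j (Finset.notMem_empty j)
        rw [this]
      | insert j t hj ih =>
        intro a b hab
        have step := upd a j (b j)
        rw [step]
        apply ih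
        intro j' hj'
        by_cases hjj : j' = j
        · subst hjj; simp [Function.update_self]
        · rw [Function.update_of_ne hjj]
          exact hab j' (by simp [hjj, hj'])
    intro a b
    exact main Finset.univ a b (fun j hj => absurd (Finset.mem_univ j) hj)
  -- conclude
  funext a
  have hall : ∀ b, p b = r a * q b := by
    intro b
    have := const b a
    simp only [hr] at this
    rw [div_eq_div_iff (hq_pos b).ne' (hq_pos a).ne'] at this
    rw [div_mul_eq_mul_div, eq_div_iff (hq_pos a).ne']
    linarith [this]
  have hsum : ∑ b, p b = r a * ∑ b, q b := by
    rw [Finset.mul_sum]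
    exact Finset.sum_congr rfl fun b _ => hall b
  rw [hp_sum, hq_sum, mul_one] at hsum
  have hra : r a = 1 := hsum.symm
  have := hall a
  rw [hra, one_mul] at this
  exact this
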